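/- Let (A, B, u_O, u_L) be a finite two-player bimatrix game and let b ∈ B be an action of the learner that is not weakly dominated. Then there exist a mixed strategy α' ∈ Δ(A) and a real number κ > 0 such that u_L(α', b) ≥ u_L(α', b') + κ for every b' ∈ B with b' ≠ b. -/

import Mathlib

open Finset

/-- A probability distribution (mixed strategy) on a finite type. -/
def IsDist {X : Type*} [Fintype X] (f : X → ℝ) : Prop :=
  (∀ x, 0 ≤ f x) ∧ ∑ x, f x = 1

/-- If an action `b` of the learner is not weakly dominated (there is no mixed
strategy supported on `B \ {b}` that weakly dominates it), then there is a mixed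
strategy `α'` of the optimizer and `κ > 0` with
`u_L(α', b) ≥ u_L(α', b') + κ` for every `b' ≠ b`. -/
theorem stmt0 {A B : Type*} [Fintype A] [Fintype B] [Nonempty A] [Nonempty B]
    (uO uL : A → B → ℝ) (b : B)
    (hnd : ¬ ∃ β : B → ℝ, IsDist β ∧ β b = 0 ∧
      ∀ a : A, uL a b ≤ ∑ b', β b' * uL a b') :
    ∃ (α' : A → ℝ) (κ : ℝ), IsDist α' ∧ 0 < κ ∧
      ∀ b' : B, b' ≠ b → (∑ a, α' a * uL a b') + κ ≤ ∑ a, α' a * uL a b := by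
  classical
  by_cases hB : ∀ b' : B, b' = b
  · refine ⟨fun _ => (Fintype.card A : ℝ)⁻¹, 1, ⟨fun _ => by positivity, ?_⟩, one_pos,
      fun b' hb' => absurd (hB b') hb'⟩
    rw [Finset.sum_const, Finset.card_univ, nsmul_eq_mul, mul_inv_cancel₀]
    exact_mod_cast Fintype.card_ne_zero
  push_neg at hB
  obtain ⟨b₀, hb₀⟩ := hB
  -- the linear map sending a mixed strategy β to its payoff-difference vector
  set T : (B → ℝ) →ₗ[ℝ] (A → ℝ) :=
    { toFun := fun β => fun a => ∑ b', β b' * (uL a b' - uL a b)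
      map_add' := by
        intro x y; funext a
        simp [add_mul, Finset.sum_add_distrib]
      map_smul' := by
        intro c x; funext a
        simp [Finset.mul_sum, mul_assoc] } with hT
  have hTapp : ∀ (β : B → ℝ) (a : A), T β a = ∑ b', β b' * (uL a b' - uL a b) := by
    intro β a; rfl
  set S : Set (B → ℝ) := stdSimplex ℝ B ∩ {β | β b = 0} with hS
  have hSconv : Convex ℝ S := (convex_stdSimplex ℝ B).inter
    (by intro x hx y hy s t hs ht hst
        simp only [Set.mem_setOf_eq] at hx hy ⊢
        simp [hx, hy])
  have hScomp : IsCompact S := (isCompact_stdSimplex ℝ B).inter_right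
    (isClosed_singleton.preimage (continuous_apply b))
  set C : Set (A → ℝ) := T '' S with hC
  have hCconv : Convex ℝ C := hSconv.linear_image T
  have hCcomp : IsCompact C := hScomp.image T.continuous_of_finiteDimensional
  set K : Set (A → ℝ) := {x | ∀ a, 0 ≤ x a} with hK
  have hKconv : Convex ℝ K := by
    intro x hx y hy s t hs ht hst a
    have := hx a; have := hy a
    simp only [Pi.add_apply, Pi.smul_apply, smul_eq_mul]
    positivity
  have hKclosed : IsClosed K := by
    have : K = ⋂ a : A, (fun x : A → ℝ => x a) ⁻¹' Set.Ici 0 := by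
      ext x; simp [hK]
    rw [this]
    exact isClosed_iInter fun a => isClosed_Ici.preimage (continuous_apply a)
  have hdisj : Disjoint C K := by
    rw [Set.disjoint_left]
    rintro x ⟨β, ⟨⟨hβ0, hβ1⟩, hβb⟩, rfl⟩ hxK
    apply hnd
    refine ⟨β, ⟨hβ0, hβ1⟩, hβb, fun a => ?_⟩
    have h := hxK a
    rw [hTapp] at h
    have : ∑ b', β b' * (uL a b' - uL a b)
        = (∑ b', β b' * uL a b') - uL a b := by
      simp only [mul_sub]
      rw [Finset.sum_sub_distrib, ← Finset.sum_mul, hβ1, one_mul]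
    linarith [this ▸ h]
  obtain ⟨f, u, v, hfu, huv, hvf⟩ :=
    geometric_hahn_banach_compact_closed hCconv hCcomp hKconv hKclosed hdisj
  have hv0 : v < 0 := by
    have := hvf 0 (fun a => le_refl 0)
    simpa using this
  set y : A → ℝ := fun a => f (Pi.single a 1) with hy
  have hy0 : ∀ a, 0 ≤ y a := by
    intro a
    by_contra h
    push_neg at h
    set t := (v - 1) / y a with ht
    have ht0 : 0 ≤ t := by
      rw [ht, div_nonneg_iff]; right; constructor <;> linarith
    have hmem : t • (Pi.single a 1 : A → ℝ) ∈ K := by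
      intro a'
      simp only [Pi.smul_apply, smul_eq_mul]
      rcases eq_or_ne a' a with rfl | hne
      · simp [ht0]
      · simp [Pi.single_apply, hne]
    have := hvf _ hmem
    rw [map_smul] at this
    have : v < t * y a := this
    rw [ht, div_mul_cancel₀ _ (ne_of_lt h)] at this
    linarith
  have hf : ∀ x : A → ℝ, f x = ∑ a, x a * y a := by
    intro x
    conv_lhs => rw [← Finset.univ_sum_single x]
    rw [map_sum]
    refine Finset.sum_congr rfl fun a _ => ?_
    have : (Pi.single a (x a) : A → ℝ) = x a • (Pi.single a 1 : A → ℝ) := by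
      funext a'
      rcases eq_or_ne a' a with rfl | hne
      · simp
      · simp [Pi.single_apply, hne]
    rw [this, map_smul]
    rfl
  -- a point of C
  have hmemC : ∀ b' : B, b' ≠ b → T (Pi.single b' 1) ∈ C := by
    intro b' hb'
    refine ⟨Pi.single b' 1, ⟨⟨?_, ?_⟩, ?_⟩, rfl⟩
    · intro x
      rcases eq_or_ne x b' with rfl | hne
      · simp
      · simp [Pi.single_apply, hne]
    · simp
    · simp [Pi.single_apply, hb']
  have hCval : ∀ b' : B, b' ≠ b →
      (∑ a, y a * (uL a b' - uL a b)) < u := by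
    intro b' hb'
    have h := hfu _ (hmemC b' hb')
    rw [hf] at h
    have : ∑ a, T (Pi.single b' 1) a * y a = ∑ a, y a * (uL a b' - uL a b) := by
      refine Finset.sum_congr rfl fun a _ => ?_
      rw [hTapp]
      rw [Finset.sum_eq_single b']
      · simp [mul_comm]
      · intro c _ hc; simp [Pi.single_apply, hc]
      · intro h; exact (h (Finset.mem_univ b')).elim
    rwa [this] at h
  have hu0 : u < 0 := lt_trans huv hv0
  have hsum : 0 < ∑ a, y a := by
    rcases (Finset.sum_nonneg fun a _ => hy0 a).lt_or_eq with h | h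
    · exact h
    have hz : ∀ a, y a = 0 := by
      intro a
      have := (Finset.sum_eq_zero_iff_of_nonneg fun a _ => hy0 a).mp h.symm
      exact this a (Finset.mem_univ a)
    have := hCval b₀ hb₀
    simp [hz] at this
    linarith
  refine ⟨fun a => y a / ∑ a, y a, -u / ∑ a, y a, ⟨fun a => div_nonneg (hy0 a) hsum.le, ?_⟩,
    div_pos (by linarith) hsum, ?_⟩
  · rw [← Finset.sum_div, div_self (ne_of_gt hsum)]
  · intro b' hb'
    have h := hCval b' hb'
    have hdiv : (∑ a, y a * (uL a b' - uL a b)) / (∑ a, y a) ≤ u / ∑ a, y a :=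
      div_le_div_of_nonneg_right h.le hsum.le
    rw [Finset.sum_div] at hdiv
    have heq : ∀ a, y a * (uL a b' - uL a b) / (∑ a, y a)
        = y a / (∑ a, y a) * uL a b' - y a / (∑ a, y a) * uL a b := by
      intro a; field_simp
    rw [Finset.sum_congr rfl fun a _ => heq a, Finset.sum_sub_distrib] at hdiv
    have : -u / ∑ a, y a = -(u / ∑ a, y a) := by ring
    linarith [hdiv]
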